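/- Let M ≥ N ≥ r ≥ 1 be integers, let s ≥ 1 be an integer, let a_1 < a_2 < … < a_s be real numbers with a_1 > −1, and let r_1, …, r_s be positive integers with r_1 + ⋯ + r_s = r. Fix r' ∈ {1, …, r} and let s' ∈ {1, …, s} and t' ∈ {1, …, r_{s'}} be determined by r' = r_1 + ⋯ + r_{s'−1} + t'. Let c > 0 and 0 < R < c be such that |1 − c| < R and |1/(1+a_j) − c| < R for all 1 ≤ j ≤ s'. Then for every integer k with 0 ≤ k ≤ N−r+r'−2, ∫_0^∞ x^{M−N+k} · [ (1/(2πi)) ∮_{|z−c|=R} e^{−M x z} · z^{M−r+r'−1} · (z−1)^{−(N−r)} · (∏_{j=1}^{s'−1} (z − 1/(1+a_j))^{−r_j}) · (z − 1/(1+a_{s'}))^{−t'} dz ] dx = 0. -/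

import Mathlib

set_option maxHeartbeats 1000000

open MeasureTheory Set Complex Filter Metric


lemma aux_integrable {b : ℂ} (hb : 0 < b.re) (m : ℕ) :
    IntegrableOn (fun x : ℝ => (x : ℂ) ^ m * Complex.exp (-b * x)) (Ioi 0) := by
  have hg : IntegrableOn (fun x : ℝ => x ^ m * Real.exp (-b.re * x)) (Ioi 0) := by
    have := integrableOn_rpow_mul_exp_neg_mul_rpow (s := (m : ℝ)) (p := 1)
      (by exact neg_one_lt_zero.trans_le (Nat.cast_nonneg m)) one_pos hb
    refine this.congr_fun (fun x hx => ?_) measurableSet_Ioi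
    simp only [Real.rpow_one, Real.rpow_natCast]
  refine hg.mono' ?_ ?_
  · exact (Continuous.mul (by continuity) (by continuity)).aestronglyMeasurable
  · filter_upwards [ae_restrict_mem measurableSet_Ioi] with x hx
    simp only [norm_mul, Complex.norm_exp, norm_pow, Complex.norm_real, Real.norm_eq_abs]
    rw [abs_of_pos (show (0:ℝ) < x from hx)]
    have : (-b * ↑x).re = -b.re * x := by simp [Complex.mul_re]
    rw [this]

lemma aux_tendsto_zero {b : ℂ} (hb : 0 < b.re) (m : ℕ) :
    Tendsto (fun x : ℝ => (x : ℂ) ^ m * Complex.exp (-b * x)) atTop (nhds 0) := by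
  have hbound : ∀ᶠ x : ℝ in atTop, ‖(x : ℂ) ^ m * Complex.exp (-b * x)‖
      ≤ b.re⁻¹ ^ m * ((b.re * x) ^ m * Real.exp (-(b.re * x))) := by
    filter_upwards [eventually_ge_atTop (0:ℝ)] with x hx
    simp only [norm_mul, Complex.norm_exp, norm_pow, Complex.norm_real, Real.norm_eq_abs]
    have h1 : (-b * ↑x).re = -(b.re * x) := by simp [Complex.mul_re]
    have h2 : b.re⁻¹ ^ m * ((b.re * x) ^ m * Real.exp (-(b.re * x)))
        = x ^ m * Real.exp (-(b.re * x)) := by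
      rw [← mul_assoc, ← mul_pow, ← mul_assoc, inv_mul_cancel₀ hb.ne', one_mul]
    rw [h1, h2, _root_.abs_of_nonneg hx]
  have htend : Tendsto (fun x : ℝ => b.re⁻¹ ^ m * ((b.re * x) ^ m * Real.exp (-(b.re * x))))
      atTop (nhds 0) := by
    rw [show (0:ℝ) = b.re⁻¹ ^ m * 0 by ring]
    exact ((Real.tendsto_pow_mul_exp_neg_atTop_nhds_zero m).comp
      (tendsto_id.const_mul_atTop hb)).const_mul _
  exact squeeze_zero_norm' hbound htend

lemma aux_integral {b : ℂ} (hb : 0 < b.re) (m : ℕ) :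
    ∫ x in Ioi (0:ℝ), (x : ℂ) ^ m * Complex.exp (-b * x) = (Nat.factorial m : ℂ) / b ^ (m + 1) := by
  have hbne : b ≠ 0 := fun h => by simp [h] at hb
  induction m with
  | zero =>
    have hF : ∀ x : ℝ, HasDerivAt (fun y : ℝ => -Complex.exp (-b * y) / b)
        (Complex.exp (-b * x)) x := by
      intro x
      have h1 : HasDerivAt (fun z : ℂ => -Complex.exp (-b * z) / b)
          (Complex.exp (-b * x)) (x : ℂ) := by
        have := (((hasDerivAt_id (x : ℂ)).const_mul (-b)).cexp.neg).div_const b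
        refine this.congr_deriv ?_
        field_simp
        rfl
      exact h1.comp_ofReal
    have h0 := integral_Ioi_of_hasDerivAt_of_tendsto' (m := 0) (fun x _ => hF x)
      ((aux_integrable hb 0).congr_fun (fun x _ => by simp) measurableSet_Ioi)
      (by simpa using ((aux_tendsto_zero hb 0).neg.div_const b))
    simp only [Complex.ofReal_zero, mul_zero, Complex.exp_zero] at h0
    calc ∫ x in Ioi (0:ℝ), (x : ℂ) ^ 0 * Complex.exp (-b * x)
        = ∫ x in Ioi (0:ℝ), Complex.exp (-b * x) := by
          refine setIntegral_congr_fun measurableSet_Ioi (fun x _ => by simp)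
      _ = 0 - -1 / b := h0
      _ = (Nat.factorial 0 : ℂ) / b ^ (0 + 1) := by rw [Nat.factorial_zero]; push_cast; ring
  | succ m ih =>
    have hF : ∀ x : ℝ, HasDerivAt (fun y : ℝ => (y : ℂ) ^ (m + 1) * Complex.exp (-b * y))
        ((m + 1 : ℂ) * (x : ℂ) ^ m * Complex.exp (-b * x)
          + (-b) * ((x : ℂ) ^ (m + 1) * Complex.exp (-b * x))) x := by
      intro x
      have h1 : HasDerivAt (fun z : ℂ => z ^ (m + 1) * Complex.exp (-b * z))
          ((m + 1 : ℂ) * (x : ℂ) ^ m * Complex.exp (-b * x)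
            + (-b) * ((x : ℂ) ^ (m + 1) * Complex.exp (-b * x))) (x : ℂ) := by
        have := (hasDerivAt_pow (m + 1) (x : ℂ)).mul
          (((hasDerivAt_id (x : ℂ)).const_mul (-b)).cexp)
        refine this.congr_deriv ?_
        simp only [id_eq, Nat.add_sub_cancel, mul_one]
        push_cast
        ring
      exact h1.comp_ofReal
    have hint : IntegrableOn (fun x : ℝ => (m + 1 : ℂ) * (x : ℂ) ^ m * Complex.exp (-b * x)
        + (-b) * ((x : ℂ) ^ (m + 1) * Complex.exp (-b * x))) (Ioi 0) := by
      refine Integrable.add ?_ ?_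
      · simpa [mul_assoc] using ((aux_integrable hb m).const_mul (m + 1 : ℂ))
      · exact (aux_integrable hb (m + 1)).const_mul (-b)
    have h0 := integral_Ioi_of_hasDerivAt_of_tendsto' (m := 0) (fun x _ => hF x) hint
      (aux_tendsto_zero hb (m + 1))
    simp only [Complex.ofReal_zero, zero_pow (Nat.succ_ne_zero m), zero_mul, sub_zero] at h0
    rw [integral_add (by simpa [mul_assoc] using ((aux_integrable hb m).const_mul ((m:ℂ) + 1)))
        ((aux_integrable hb (m + 1)).const_mul (-b))] at h0
    simp only [mul_assoc] at h0
    rw [integral_const_mul, integral_const_mul, ih] at h0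
    have hI : ∫ x in Ioi (0:ℝ), (x:ℂ) ^ (m + 1) * Complex.exp (-b * x)
        = ((m:ℂ) + 1) * ((Nat.factorial m : ℂ) / b ^ (m + 1)) / b := by
      rw [eq_div_iff hbne]
      linear_combination -h0
    rw [hI, Nat.factorial_succ, pow_succ]
    push_cast
    ring


lemma aux_vanish {c : ℂ} {R : ℝ} (hR : 0 < R) (n : ℕ) {f : ℂ → ℂ}
    (hd : ∀ z : ℂ, R ≤ dist z c → DifferentiableAt ℂ f z)
    (hb : ∀ ρ : ℝ, R + 1 ≤ ρ → ∀ z : ℂ, dist z c = ρ →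
      ‖f z‖ ≤ (ρ + ‖c‖) ^ n / (ρ - R) ^ (n + 2)) :
    (∮ z in C(c, R), f z) = 0 := by
  have heq : ∀ ρ : ℝ, R ≤ ρ → (∮ z in C(c, ρ), f z) = ∮ z in C(c, R), f z := by
    intro ρ hρ
    refine circleIntegral_eq_of_differentiable_on_annulus_off_countable hR hρ
      Set.countable_empty ?_ ?_
    · intro z hz
      have : R ≤ dist z c := not_lt.mp (fun h => hz.2 (mem_ball.mpr h))
      exact ((hd z this).continuousAt).continuousWithinAt
    · rintro z ⟨hz, -⟩
      have : R ≤ dist z c := le_of_lt (not_le.mp (fun h => hz.2 (mem_closedBall.mpr h)))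
      exact hd z this
  have l1 : Tendsto (fun ρ : ℝ => ρ - R) atTop atTop :=
    tendsto_atTop_add_const_right _ (-R) tendsto_id
  have hz : Tendsto (fun ρ : ℝ => (ρ - R)⁻¹) atTop (nhds 0) :=
    tendsto_inv_atTop_zero.comp l1
  have htend : Tendsto (fun ρ : ℝ => ∮ z in C(c, ρ), f z) atTop (nhds 0) := by
    refine squeeze_zero_norm'
      (a := fun ρ : ℝ => 2 * Real.pi * ρ * ((ρ + ‖c‖) ^ n / (ρ - R) ^ (n + 2))) ?_ ?_
    · filter_upwards [eventually_ge_atTop (R + 1)] with ρ hρ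
      have hρ0 : 0 ≤ ρ := le_trans (by linarith) hρ
      exact circleIntegral.norm_integral_le_of_norm_le_const hρ0
        (fun z hzz => hb ρ hρ z (mem_sphere.mp hzz))
    · have key : Tendsto (fun ρ : ℝ => 2 * Real.pi *
          ((1 + R * (ρ - R)⁻¹) * ((1 + (‖c‖ + R) * (ρ - R)⁻¹) ^ n * (ρ - R)⁻¹)))
          atTop (nhds 0) := by
        have h1 : Tendsto (fun ρ : ℝ => 1 + R * (ρ - R)⁻¹) atTop (nhds 1) := by
          simpa using (tendsto_const_nhds (x := (1:ℝ))).add (hz.const_mul R)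
        have h2 : Tendsto (fun ρ : ℝ => (1 + (‖c‖ + R) * (ρ - R)⁻¹) ^ n) atTop (nhds 1) := by
          simpa using ((tendsto_const_nhds (x := (1:ℝ))).add (hz.const_mul (‖c‖ + R))).pow n
        simpa using tendsto_const_nhds.mul (h1.mul (h2.mul hz))
      refine key.congr' ?_
      filter_upwards [eventually_gt_atTop R] with ρ hρ
      have h3 : ρ - R ≠ 0 := sub_ne_zero.2 (ne_of_gt hρ)
      have e1 : 1 + R * (ρ - R)⁻¹ = ρ / (ρ - R) := by field_simp; ring
      have e2 : 1 + (‖c‖ + R) * (ρ - R)⁻¹ = (ρ + ‖c‖) / (ρ - R) := by field_simp; ring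
      simp only [e1, e2, div_pow]
      field_simp
      ring
  have hconst : Tendsto (fun _ : ℝ => ∮ z in C(c, R), f z) atTop (nhds 0) :=
    htend.congr' (by filter_upwards [eventually_ge_atTop R] with ρ hρ using heq ρ hρ)
  exact tendsto_nhds_unique tendsto_const_nhds hconst

lemma aux_integrable_real {b : ℝ} (hb : 0 < b) (m : ℕ) :
    IntegrableOn (fun x : ℝ => x ^ m * Real.exp (-b * x)) (Ioi 0) := by
  have := integrableOn_rpow_mul_exp_neg_mul_rpow (s := (m : ℝ)) (p := 1)
    (neg_one_lt_zero.trans_le (Nat.cast_nonneg m)) one_pos hb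
  refine this.congr_fun (fun x hx => ?_) measurableSet_Ioi
  simp only [Real.rpow_one, Real.rpow_natCast]

/-- Orthogonality of the multiple Laguerre functions of type I (given by a contour
integral over a circle enclosing `1` and the `1/(1+aⱼ)` but not the origin) to low-degree
monomials, with respect to the weight `x^(M-N) e^(-Mx)` on `(0, ∞)` (here absorbed into
the integrand). -/
theorem stmt_7 (M N r s : ℕ) (hr : 1 ≤ r) (hrN : r ≤ N) (hNM : N ≤ M) (hs : 1 ≤ s)
    (a : Fin s → ℝ) (ha : StrictMono a) (ha1 : -1 < a ⟨0, hs⟩)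
    (rm : Fin s → ℕ) (hrm : ∀ j, 1 ≤ rm j) (hsum : ∑ j, rm j = r)
    (r' : ℕ) (hr'1 : 1 ≤ r') (hr'r : r' ≤ r)
    (s' : Fin s) (t' : ℕ) (ht'1 : 1 ≤ t') (ht' : t' ≤ rm s')
    (hdecomp : r' = (∑ j ∈ Finset.Iio s', rm j) + t')
    (c : ℝ) (hc : 0 < c) (R : ℝ) (hR0 : 0 < R) (hRc : R < c)
    (h1 : |1 - c| < R) (hja : ∀ j : Fin s, j ≤ s' → |1 / (1 + a j) - c| < R)
    (k : ℕ) (hk : k + r + 2 ≤ N + r') :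
    ∫ x in Set.Ioi (0 : ℝ), (x : ℂ) ^ (M - N + k) *
      ((2 * (Real.pi : ℂ) * Complex.I)⁻¹ *
        ∮ z in C((c : ℂ), R),
          Complex.exp (-((M : ℂ) * (x : ℂ)) * z) * z ^ (M - r + r' - 1) /
            ((z - 1) ^ (N - r) *
              (∏ j ∈ Finset.Iio s', (z - 1 / (1 + (a j : ℂ))) ^ rm j) *
              (z - 1 / (1 + (a s' : ℂ))) ^ t')) = 0 := by
  set w : Fin s → ℂ := fun j => 1 / (1 + (a j : ℂ)) with hw
  set D : ℂ → ℂ := fun z => (z - 1) ^ (N - r) *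
      (∏ j ∈ Finset.Iio s', (z - w j) ^ rm j) * (z - w s') ^ t' with hDdef
  set m : ℕ := M - N + k with hm
  set A : ℕ := M - r + r' - 1 with hA
  set n : ℕ := N + r' - (k + r + 2) with hn
  set d : ℕ := N - r + r' with hd
  have hAeq : A = n + (m + 1) := by omega
  have hnd : n + 2 ≤ d := by omega
  have hdeg : N - r + ((∑ j ∈ Finset.Iio s', rm j) + t') = d := by omega
  have hM1 : 1 ≤ M := le_trans hr (le_trans hrN hNM)
  have hMne : ((M : ℂ)) ≠ 0 := Nat.cast_ne_zero.mpr (by omega)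
  have hcR : 0 < c - R := by linarith
  -- poles are within distance R of the center
  have hp1 : ‖(1 : ℂ) - (c : ℂ)‖ < R := by
    rw [show (1 : ℂ) - (c : ℂ) = ((1 - c : ℝ) : ℂ) by push_cast; ring, Complex.norm_real]
    exact h1
  have hpw : ∀ j : Fin s, j ≤ s' → ‖w j - (c : ℂ)‖ < R := by
    intro j hj
    rw [show w j - (c : ℂ) = ((1 / (1 + a j) - c : ℝ) : ℂ) by push_cast; ring, Complex.norm_real]
    exact hja j hj
  -- factors of D are bounded below away from the disc
  have hfac : ∀ z : ℂ, R ≤ dist z (c : ℂ) → ∀ p : ℂ, ‖p - (c : ℂ)‖ < R →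
      dist z (c : ℂ) - R ≤ ‖z - p‖ := by
    intro z hz p hp
    have : ‖z - (c : ℂ)‖ - ‖p - (c : ℂ)‖ ≤ ‖z - p‖ := by
      have := norm_sub_norm_le (z - (c : ℂ)) (p - (c : ℂ))
      simpa [sub_sub_sub_cancel_right] using this
    have h2 : dist z (c : ℂ) = ‖z - (c : ℂ)‖ := by rw [dist_eq_norm]
    linarith
  have hfzne : ∀ z : ℂ, R ≤ dist z (c : ℂ) → ∀ p : ℂ, ‖p - (c : ℂ)‖ < R → z - p ≠ 0 := by
    intro z hz p hp
    intro h
    have hzp : z = p := sub_eq_zero.mp h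
    rw [hzp, dist_eq_norm] at hz
    linarith
  have hDne : ∀ z : ℂ, R ≤ dist z (c : ℂ) → D z ≠ 0 := by
    intro z hz
    refine mul_ne_zero (mul_ne_zero (pow_ne_zero _ (hfzne z hz 1 hp1)) ?_)
      (pow_ne_zero _ (hfzne z hz (w s') (hpw s' le_rfl)))
    rw [Finset.prod_ne_zero_iff]
    exact fun j hj => pow_ne_zero _ (hfzne z hz (w j) (hpw j (le_of_lt (Finset.mem_Iio.mp hj))))
  have hDdiff : ∀ z : ℂ, DifferentiableAt ℂ D z := by
    intro z
    exact (((differentiableAt_id.sub_const 1).pow _).mul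
      (DifferentiableAt.fun_finsetProd (fun j _ => (differentiableAt_id.sub_const (w j)).pow _))).mul
      ((differentiableAt_id.sub_const (w s')).pow _)
  have hDcont : Continuous D := by
    refine (((continuous_id.sub continuous_const).pow _).mul ?_).mul
      ((continuous_id.sub continuous_const).pow _)
    exact continuous_finset_prod _ fun j _ => (continuous_id.sub continuous_const).pow _
  -- the contour integral of z^n / D z vanishes
  have hvanish : (∮ z in C((c : ℂ), R), z ^ n / D z) = 0 := by
    refine aux_vanish hR0 n (fun z hz => ((differentiableAt_pow n).div (hDdiff z) (hDne z hz)))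
      (fun ρ hρ z hz => ?_)
    have hzge : R ≤ dist z (c : ℂ) := by rw [hz]; linarith
    have hρR : (1 : ℝ) ≤ ρ - R := by linarith
    have hρR0 : (0 : ℝ) ≤ ρ - R := by linarith
    have hnum : ‖z ^ n‖ ≤ (ρ + ‖(c : ℂ)‖) ^ n := by
      rw [norm_pow]
      refine pow_le_pow_left₀ (norm_nonneg _) ?_ n
      calc ‖z‖ ≤ ‖z - (c : ℂ)‖ + ‖(c : ℂ)‖ := by
            simpa using norm_add_le (z - (c : ℂ)) (c : ℂ)
        _ = ρ + ‖(c : ℂ)‖ := by rw [← dist_eq_norm, hz]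
    have hbase : ∀ p : ℂ, ‖p - (c : ℂ)‖ < R → ρ - R ≤ ‖z - p‖ := by
      intro p hp
      have := hfac z hzge p hp
      rw [hz] at this
      exact this
    have hden : (ρ - R) ^ d ≤ ‖D z‖ := by
      have expand : (((ρ - R) ^ (N - r)) * ∏ j ∈ Finset.Iio s', (ρ - R) ^ rm j)
          * (ρ - R) ^ t' = (ρ - R) ^ d := by
        rw [Finset.prod_pow_eq_pow_sum, ← pow_add, ← pow_add]
        congr 1
        omega
      rw [hDdef, ← expand]
      simp only [norm_mul, norm_pow, norm_prod]
      have e1 : (ρ - R) ^ (N - r) ≤ ‖z - 1‖ ^ (N - r) :=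
        pow_le_pow_left₀ hρR0 (hbase 1 hp1) _
      have e2 : (∏ j ∈ Finset.Iio s', (ρ - R) ^ rm j)
          ≤ ∏ j ∈ Finset.Iio s', ‖z - w j‖ ^ rm j :=
        Finset.prod_le_prod (fun j _ => pow_nonneg hρR0 _)
          (fun j hj => pow_le_pow_left₀ hρR0
            (hbase (w j) (hpw j (le_of_lt (Finset.mem_Iio.mp hj)))) _)
      have e3 : (ρ - R) ^ t' ≤ ‖z - w s'‖ ^ t' :=
        pow_le_pow_left₀ hρR0 (hbase (w s') (hpw s' le_rfl)) _
      have n1 : (0:ℝ) ≤ ∏ j ∈ Finset.Iio s', (ρ - R) ^ rm j :=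
        Finset.prod_nonneg (fun j _ => pow_nonneg hρR0 _)
      have n2 : (0:ℝ) ≤ ‖z - 1‖ ^ (N - r) := pow_nonneg (norm_nonneg _) _
      exact mul_le_mul (mul_le_mul e1 e2 n1 n2) e3 (pow_nonneg hρR0 _)
        (mul_nonneg n2 (le_trans n1 e2))
    have hden' : (ρ - R) ^ (n + 2) ≤ ‖D z‖ :=
      le_trans (pow_le_pow_right₀ hρR hnd) hden
    rw [norm_div]
    exact div_le_div₀ (pow_nonneg (add_nonneg (by linarith) (norm_nonneg _)) n) hnum (pow_pos (by linarith) _) hden'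
  -- basic facts about points on the circle
  have hsph : ∀ θ : ℝ, dist (circleMap (c : ℂ) R θ) (c : ℂ) = R := fun θ => by
    simpa using mem_sphere.mp (circleMap_mem_sphere (c : ℂ) hR0.le θ)
  have hre : ∀ z : ℂ, dist z (c : ℂ) = R → c - R ≤ z.re := by
    intro z hz
    have h1 : |(z - (c : ℂ)).re| ≤ ‖z - (c : ℂ)‖ := Complex.abs_re_le_norm _
    rw [← dist_eq_norm, hz] at h1
    have h2 : (z - (c : ℂ)).re = z.re - c := by simp
    rw [h2] at h1
    have := abs_le.mp h1
    linarith [this.1]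
  have hz0 : ∀ z : ℂ, dist z (c : ℂ) = R → z ≠ 0 := by
    intro z hz h0
    rw [h0, dist_comm, dist_zero_right, Complex.norm_real, Real.norm_eq_abs, abs_of_pos hc] at hz
    linarith
  have hzub : ∀ z : ℂ, dist z (c : ℂ) = R → ‖z‖ ≤ c + R := by
    intro z hz
    calc ‖z‖ ≤ ‖z - (c : ℂ)‖ + ‖(c : ℂ)‖ := by simpa using norm_add_le (z - (c : ℂ)) (c : ℂ)
      _ = R + c := by rw [← dist_eq_norm, hz, Complex.norm_real, Real.norm_eq_abs, abs_of_pos hc]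
      _ = c + R := by ring
  have hrepos : ∀ z : ℂ, dist z (c : ℂ) = R → 0 < ((M : ℂ) * z).re := by
    intro z hz
    have : ((M : ℂ) * z).re = M * z.re := by
      simp [Complex.mul_re]
    rw [this]
    have := hre z hz
    have hM0 : (0:ℝ) < M := by exact_mod_cast (by omega : 0 < M)
    nlinarith
  -- minimum of ‖D z‖ on the circle
  obtain ⟨z₀, hz₀mem, hz₀min⟩ := (isCompact_sphere (c : ℂ) R).exists_isMinOn
    (NormedSpace.sphere_nonempty.mpr hR0.le)
    (continuous_norm.comp hDcont).continuousOn
  have hz₀R : dist z₀ (c : ℂ) = R := mem_sphere.mp hz₀mem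
  set δ : ℝ := ‖D z₀‖ with hδdef
  have hδ : 0 < δ := norm_pos_iff.mpr (hDne z₀ (le_of_eq hz₀R.symm))
  have hδle : ∀ z : ℂ, dist z (c : ℂ) = R → δ ≤ ‖D z‖ := fun z hz =>
    hz₀min (mem_sphere.mpr hz)
  set δM : ℝ := M * (c - R) with hδMdef
  have hδM : 0 < δM := by
    have hM0 : (0:ℝ) < M := by exact_mod_cast (by omega : 0 < M)
    exact mul_pos hM0 hcR
  set B : ℝ := R * ((c + R) ^ A / δ) with hBdef
  -- pointwise norm bound for the double integrand
  have hptbd : ∀ x : ℝ, 0 ≤ x → ∀ θ : ℝ,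
      ‖(x : ℂ) ^ m * (deriv (circleMap (c : ℂ) R) θ •
        (Complex.exp (-((M : ℂ) * (x : ℂ)) * circleMap (c : ℂ) R θ) *
          circleMap (c : ℂ) R θ ^ A / D (circleMap (c : ℂ) R θ)))‖
      ≤ B * (x ^ m * Real.exp (-δM * x)) := by
    intro x hx θ
    set z := circleMap (c : ℂ) R θ with hzdef
    have hzR : dist z (c : ℂ) = R := hsph θ
    have hM0 : (0:ℝ) ≤ M := by positivity
    have hexp : ‖Complex.exp (-((M : ℂ) * (x : ℂ)) * z)‖ ≤ Real.exp (-δM * x) := by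
      rw [Complex.norm_exp]
      apply Real.exp_le_exp.mpr
      have h1 : (-((M : ℂ) * (x : ℂ)) * z).re = -(M * x * z.re) := by
        simp [Complex.mul_re]
      rw [h1, hδMdef]
      have h2 := hre z hzR
      have h3 := mul_le_mul_of_nonneg_left h2 (mul_nonneg hM0 hx)
      nlinarith
    have hderiv : ‖deriv (circleMap (c : ℂ) R) θ‖ = R := by
      rw [deriv_circleMap]
      simp [abs_of_pos hR0]
    calc ‖(x : ℂ) ^ m * (deriv (circleMap (c : ℂ) R) θ •
          (Complex.exp (-((M : ℂ) * (x : ℂ)) * z) * z ^ A / D z))‖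
        = x ^ m * (R * (‖Complex.exp (-((M : ℂ) * (x : ℂ)) * z)‖ * ‖z‖ ^ A / ‖D z‖)) := by
          rw [smul_eq_mul]
          simp only [norm_mul, norm_div, norm_pow, hderiv]
          rw [Complex.norm_real, Real.norm_eq_abs, _root_.abs_of_nonneg hx]
      _ ≤ x ^ m * (R * (Real.exp (-δM * x) * (c + R) ^ A / δ)) := by
          have hnum : ‖Complex.exp (-((M : ℂ) * (x : ℂ)) * z)‖ * ‖z‖ ^ A
              ≤ Real.exp (-δM * x) * (c + R) ^ A := by
            refine mul_le_mul hexp (pow_le_pow_left₀ (norm_nonneg _) (hzub z hzR) _)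
              (by positivity) (by positivity)
          have hdd : ‖Complex.exp (-((M : ℂ) * (x : ℂ)) * z)‖ * ‖z‖ ^ A / ‖D z‖
              ≤ Real.exp (-δM * x) * (c + R) ^ A / δ :=
            div_le_div₀ (by positivity) hnum hδ (hδle z hzR)
          have hxm : (0:ℝ) ≤ x ^ m := by positivity
          nlinarith [mul_le_mul_of_nonneg_left hdd hR0.le]
      _ = B * (x ^ m * Real.exp (-δM * x)) := by
          rw [hBdef]
          ring
  -- continuity of the double integrand
  have hγcont : Continuous (fun θ : ℝ => circleMap (c : ℂ) R θ) := continuous_circleMap _ _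
  have hderivcont : Continuous (fun θ : ℝ => deriv (circleMap (c : ℂ) R) θ) := by
    simp only [deriv_circleMap]
    exact (continuous_circleMap 0 R).mul continuous_const
  have hcont2 : Continuous (fun p : ℝ × ℝ => (p.1 : ℂ) ^ m *
      (deriv (circleMap (c : ℂ) R) p.2 •
        (Complex.exp (-((M : ℂ) * (p.1 : ℂ)) * circleMap (c : ℂ) R p.2) *
          circleMap (c : ℂ) R p.2 ^ A / D (circleMap (c : ℂ) R p.2)))) := by
    refine ((Complex.continuous_ofReal.comp continuous_fst).pow m).mul ?_
    simp only [smul_eq_mul]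
    refine ((hderivcont.comp continuous_snd)).mul ?_
    refine Continuous.div ?_ (hDcont.comp (hγcont.comp continuous_snd))
      (fun p => hDne _ (le_of_eq (hsph p.2).symm))
    refine (Complex.continuous_exp.comp ?_).mul ((hγcont.comp continuous_snd).pow A)
    exact ((continuous_const.mul
      (Complex.continuous_ofReal.comp continuous_fst)).neg).mul (hγcont.comp continuous_snd)
  -- Fubini integrability on the product
  have hH : Integrable (Function.uncurry fun (x θ : ℝ) => (x : ℂ) ^ m *
      (deriv (circleMap (c : ℂ) R) θ •
        (Complex.exp (-((M : ℂ) * (x : ℂ)) * circleMap (c : ℂ) R θ) *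
          circleMap (c : ℂ) R θ ^ A / D (circleMap (c : ℂ) R θ))))
      ((volume.restrict (Ioi (0:ℝ))).prod (volume.restrict (Ioc (0:ℝ) (2 * Real.pi)))) := by
    have hdom : Integrable (fun p : ℝ × ℝ => (B * (p.1 ^ m * Real.exp (-δM * p.1))) * (1:ℝ))
        ((volume.restrict (Ioi (0:ℝ))).prod (volume.restrict (Ioc (0:ℝ) (2 * Real.pi)))) :=
      Integrable.mul_prod ((aux_integrable_real hδM m).const_mul B) (integrable_const 1)
    refine hdom.mono' hcont2.aestronglyMeasurable ?_
    rw [Measure.prod_restrict]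
    filter_upwards [ae_restrict_mem (measurableSet_Ioi.prod measurableSet_Ioc)] with p hp
    simpa [mul_one, Function.uncurry] using hptbd p.1 (le_of_lt hp.1) p.2
  -- evaluate the inner integral for each θ
  have hinner : ∀ θ : ℝ, (∫ x in Ioi (0:ℝ), (x : ℂ) ^ m *
      (deriv (circleMap (c : ℂ) R) θ •
        (Complex.exp (-((M : ℂ) * (x : ℂ)) * circleMap (c : ℂ) R θ) *
          circleMap (c : ℂ) R θ ^ A / D (circleMap (c : ℂ) R θ))))
      = ((Nat.factorial m : ℂ) / (M : ℂ) ^ (m + 1)) *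
        (deriv (circleMap (c : ℂ) R) θ •
          (circleMap (c : ℂ) R θ ^ n / D (circleMap (c : ℂ) R θ))) := by
    intro θ
    set z := circleMap (c : ℂ) R θ with hzdef
    have hzR : dist z (c : ℂ) = R := hsph θ
    have hzne : z ≠ 0 := hz0 z hzR
    have hDzne : D z ≠ 0 := hDne z (le_of_eq hzR.symm)
    have hbre : 0 < ((M : ℂ) * z).re := hrepos z hzR
    have heq : ∀ x : ℝ, (x : ℂ) ^ m * (deriv (circleMap (c : ℂ) R) θ •
        (Complex.exp (-((M : ℂ) * (x : ℂ)) * z) * z ^ A / D z))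
        = (deriv (circleMap (c : ℂ) R) θ * (z ^ A / D z)) *
          ((x : ℂ) ^ m * Complex.exp (-((M : ℂ) * z) * (x : ℂ))) := by
      intro x
      rw [smul_eq_mul, show Complex.exp (-((M : ℂ) * (x : ℂ)) * z)
        = Complex.exp (-((M : ℂ) * z) * (x : ℂ)) from by congr 1; ring]
      ring
    rw [setIntegral_congr_fun measurableSet_Ioi (fun x _ => heq x), integral_const_mul,
      aux_integral hbre m, smul_eq_mul]
    have hzA : z ^ A = z ^ n * z ^ (m + 1) := by rw [← pow_add, ← hAeq]
    rw [hzA, mul_pow]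
    have hzp : z ^ (m + 1) ≠ 0 := pow_ne_zero _ hzne
    have hMp : ((M : ℂ)) ^ (m + 1) ≠ 0 := pow_ne_zero _ hMne
    field_simp
  -- assemble everything
  have hpull : (∫ x in Ioi (0:ℝ), (x : ℂ) ^ m * ((2 * (Real.pi : ℂ) * Complex.I)⁻¹ *
        ∮ z in C((c : ℂ), R), Complex.exp (-((M : ℂ) * (x : ℂ)) * z) * z ^ A / D z))
      = (2 * (Real.pi : ℂ) * Complex.I)⁻¹ *
        ∫ x in Ioi (0:ℝ), ((x : ℂ) ^ m *
          ∮ z in C((c : ℂ), R), Complex.exp (-((M : ℂ) * (x : ℂ)) * z) * z ^ A / D z) := by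
    rw [← integral_const_mul]
    exact setIntegral_congr_fun measurableSet_Ioi (fun x _ => by ring)
  have hunfold : ∀ x : ℝ, ((x : ℂ) ^ m *
      ∮ z in C((c : ℂ), R), Complex.exp (-((M : ℂ) * (x : ℂ)) * z) * z ^ A / D z)
      = ∫ θ in Ioc (0:ℝ) (2 * Real.pi), (x : ℂ) ^ m *
          (deriv (circleMap (c : ℂ) R) θ •
            (Complex.exp (-((M : ℂ) * (x : ℂ)) * circleMap (c : ℂ) R θ) *
              circleMap (c : ℂ) R θ ^ A / D (circleMap (c : ℂ) R θ))) := by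
    intro x
    rw [circleIntegral, intervalIntegral.integral_of_le Real.two_pi_pos.le, ← integral_const_mul]
  have hmain : (∫ x in Ioi (0:ℝ), ((x : ℂ) ^ m *
      ∮ z in C((c : ℂ), R), Complex.exp (-((M : ℂ) * (x : ℂ)) * z) * z ^ A / D z)) = 0 := by
    simp_rw [hunfold]
    rw [integral_integral_swap hH]
    simp_rw [hinner]
    rw [integral_const_mul]
    have hback : (∫ θ in Ioc (0:ℝ) (2 * Real.pi), deriv (circleMap (c : ℂ) R) θ •
        (circleMap (c : ℂ) R θ ^ n / D (circleMap (c : ℂ) R θ)))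
        = ∮ z in C((c : ℂ), R), z ^ n / D z := by
      rw [circleIntegral, intervalIntegral.integral_of_le Real.two_pi_pos.le]
    rw [hback, hvanish, mul_zero]
  show (∫ x in Ioi (0:ℝ), (x : ℂ) ^ m * ((2 * (Real.pi : ℂ) * Complex.I)⁻¹ *
      ∮ z in C((c : ℂ), R), Complex.exp (-((M : ℂ) * (x : ℂ)) * z) * z ^ A / D z)) = 0
  rw [hpull, hmain, mul_zero]
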